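/- For fixed k ≥ 1, the k-th Fourier coefficient a_k(0) = r^{-k}/(ε √((α/ε)² - 1)) with r = α/ε + √((α/ε)² - 1) satisfies a_k(0) = (1/α)(ε/(2α))^k + O(ε^{k+2}) as ε → 0⁺. -/

import Mathlib

open Real Filter Asymptotics

/-- a_k(0) = r^{-k}/(ε √((α/ε)² - 1)) with r = α/ε + √((α/ε)² - 1) satisfies
a_k(0) = (1/α)(ε/(2α))^k + O(ε^{k+2}) as ε → 0⁺. -/
theorem stmt_13 (α : ℝ) (hα : 0 < α) (k : ℕ) (hk : 1 ≤ k) :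
    (fun ε : ℝ =>
        (1 / (α/ε + Real.sqrt ((α/ε)^2 - 1))^k) / (ε * Real.sqrt ((α/ε)^2 - 1))
          - (1/α) * (ε / (2*α))^k)
      =O[nhdsWithin 0 (Set.Ioi 0)] (fun ε : ℝ => ε^(k+2)) := by
  set G : ℝ → ℝ := fun x => 1 / ((α + Real.sqrt (α^2 - x))^k * Real.sqrt (α^2 - x)) with hGdef
  have hα2 : (α:ℝ)^2 - 0 ≠ 0 := by simpa using (pow_ne_zero 2 hα.ne')
  have hs : DifferentiableAt ℝ (fun x : ℝ => Real.sqrt (α^2 - x)) 0 :=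
    ((differentiableAt_const _).sub differentiableAt_id).sqrt hα2
  have hsqrt0 : Real.sqrt (α^2 - 0) = α := by
    rw [sub_zero, Real.sqrt_sq hα.le]
  have hG : DifferentiableAt ℝ G 0 := by
    apply (differentiableAt_const (1:ℝ)).div
    · exact (((differentiableAt_const α).add hs).pow k).mul hs
    · rw [hsqrt0]; positivity
  have h1 : (fun x => G x - G 0) =O[nhds 0] (fun x : ℝ => x) := by
    simpa using hG.isBigO_sub
  have htend : Tendsto (fun ε : ℝ => ε^2) (nhdsWithin 0 (Set.Ioi 0)) (nhds 0) := by
    have := (continuous_pow 2 (M := ℝ)).tendsto 0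
    simpa using this.mono_left nhdsWithin_le_nhds
  have h2 : (fun ε : ℝ => G (ε^2) - G 0) =O[nhdsWithin 0 (Set.Ioi 0)] (fun ε : ℝ => ε^2) :=
    h1.comp_tendsto htend
  have h3 : (fun ε : ℝ => ε^k * (G (ε^2) - G 0)) =O[nhdsWithin 0 (Set.Ioi 0)]
      (fun ε : ℝ => ε^(k+2)) := by
    have := (isBigO_refl (fun ε : ℝ => ε^k) (nhdsWithin 0 (Set.Ioi 0))).mul h2
    simpa [pow_add] using this
  refine h3.congr' ?_ (EventuallyEq.refl _ _)
  filter_upwards [self_mem_nhdsWithin] with ε hε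
  have hεpos : (0:ℝ) < ε := hε
  have hne : ε ≠ 0 := hεpos.ne'
  have hsq : Real.sqrt ((α/ε)^2 - 1) = Real.sqrt (α^2 - ε^2) / ε := by
    have h : (α/ε)^2 - 1 = (α^2 - ε^2) * (1/ε)^2 := by
      field_simp
    rw [h, Real.sqrt_mul' _ (by positivity), Real.sqrt_sq (by positivity), mul_one_div]
  rw [hGdef]
  simp only [hsq, hsqrt0]
  set β := Real.sqrt (α^2 - ε^2) with hβ
  have hc : ε * (β/ε) = β := by field_simp
  rw [← add_div, div_pow, one_div_div, div_div, hc, mul_sub, mul_one_div,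
    mul_one_div, div_pow, ← two_mul]
  ring
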